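/- The kernel of L equals the kernel of I - T̃², where L(f,g) = d_A* f + d_B* g and T̃(f,g) = (-g, f + 2Tg). -/

import Mathlib

open ContinuousLinearMap

theorem stmt6 {K₁ K₂ : Type*}
    [NormedAddCommGroup K₁] [InnerProductSpace ℂ K₁] [FiniteDimensional ℂ K₁]
    [NormedAddCommGroup K₂] [InnerProductSpace ℂ K₂] [FiniteDimensional ℂ K₂]
    (S : K₂ →L[ℂ] K₂) (hS : IsSelfAdjoint S) (hSu : S ∈ unitary (K₂ →L[ℂ] K₂))
    (dA : K₂ →L[ℂ] K₁) (h : dA ∘L adjoint dA = 1)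
    (dB : K₂ →L[ℂ] K₁) (hdB : dB = dA ∘L S)
    (T : K₁ →L[ℂ] K₁) (hT : T = dA ∘L adjoint dB)
    (L : K₁ × K₁ →L[ℂ] K₂) (hL : ∀ f g : K₁, L (f, g) = adjoint dA f + adjoint dB g)
    (Ttil : K₁ × K₁ →L[ℂ] K₁ × K₁)
    (hTtil : ∀ f g : K₁, Ttil (f, g) = (-g, f + (2:ℂ) • T g)) :
    LinearMap.ker (L : K₁ × K₁ →ₗ[ℂ] K₂) =
      LinearMap.ker (((1 - Ttil ∘L Ttil : K₁ × K₁ →L[ℂ] K₁ × K₁)) : K₁ × K₁ →ₗ[ℂ] K₁ × K₁) := by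
  have hS2 : S ∘L S = 1 := by
    have h1 := hSu.1
    rwa [hS.star_eq] at h1
  have hSS : ∀ x : K₂, S (S x) = x := by
    intro x
    calc S (S x) = (S ∘L S) x := rfl
      _ = x := by rw [hS2]; rfl
  have hadjB : adjoint dB = S ∘L adjoint dA := by
    rw [hdB, adjoint_comp, hS.adjoint_eq]
  have hAA : ∀ y : K₁, dA (adjoint dA y) = y := by
    intro y
    calc dA (adjoint dA y) = (dA ∘L adjoint dA) y := rfl
      _ = y := by rw [h]; rfl
  have hAB : ∀ y : K₁, dA (adjoint dB y) = T y := by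
    intro y; rw [hT]; rfl
  have hBA : ∀ y : K₁, dB (adjoint dA y) = T y := by
    intro y
    rw [hT, hadjB, hdB]
    rfl
  have hBB : ∀ y : K₁, dB (adjoint dB y) = y := by
    intro y
    rw [hadjB, hdB]
    show dA (S (S (adjoint dA y))) = y
    rw [hSS, hAA]
  -- characterization of ker L
  have hkerL : ∀ f g : K₁, L (f, g) = 0 ↔ (f + T g = 0 ∧ T f + g = 0) := by
    intro f g
    constructor
    · intro h0
      constructor
      · have := congrArg dA (hL f g ▸ h0)
        simpa [map_add, hAA, hAB] using this
      · have := congrArg dB (hL f g ▸ h0)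
        simpa [map_add, hBA, hBB] using this
    · rintro ⟨h1, h2⟩
      have hinner : (inner ℂ (L (f, g)) (L (f, g)) : ℂ) = 0 := by
        rw [hL]
        rw [inner_add_left, adjoint_inner_left, adjoint_inner_left,
          map_add, map_add, hAA, hAB, hBA, hBB, h1, h2,
          inner_zero_right, inner_zero_right, add_zero]
      exact inner_self_eq_zero.mp hinner
  -- characterization of ker (1 - Ttil²)
  have hkerT : ∀ f g : K₁, (1 - Ttil ∘L Ttil) (f, g) = 0 ↔
      (f + T g = 0 ∧ T f + g = 0) := by
    intro f g
    have hTT : (Ttil ∘L Ttil) (f, g) =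
        (-(f + (2:ℂ) • T g), -g + (2:ℂ) • T (f + (2:ℂ) • T g)) := by
      have : (Ttil ∘L Ttil) (f, g) = Ttil (Ttil (f, g)) := rfl
      rw [this, hTtil, hTtil]
    have happ : (1 - Ttil ∘L Ttil) (f, g) = (f, g) - (Ttil ∘L Ttil) (f, g) := by
      simp [sub_apply]
    rw [happ, hTT]
    constructor
    · intro h0
      rw [Prod.ext_iff] at h0
      obtain ⟨h1, h2⟩ := h0
      simp only [Prod.fst_sub, Prod.snd_sub, Prod.fst_zero, Prod.snd_zero, sub_eq_zero] at h1 h2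
      have h1' : f + T g = 0 := by
        have h2z : (2:ℂ) • (f + T g) = 0 := by
          linear_combination (norm := module) h1
        exact (smul_eq_zero.mp h2z).resolve_left two_ne_zero
      refine ⟨h1', ?_⟩
      have hf : f = -(T g) := by linear_combination (norm := module) h1'
      have harg : f + (2:ℂ) • T g = T g := by
        linear_combination (norm := module) hf
      rw [harg] at h2
      have hg : T (T g) = g := by
        have h2z : (2:ℂ) • (T (T g) - g) = 0 := by
          linear_combination (norm := module) -h2
        exact sub_eq_zero.mp ((smul_eq_zero.mp h2z).resolve_left two_ne_zero)
      rw [hf, map_neg, hg]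
      module
    · rintro ⟨h1, h2⟩
      have hf : f = -(T g) := by linear_combination (norm := module) h1
      have hg : T (T g) = g := by
        have h2' := h2
        rw [hf, map_neg] at h2'
        linear_combination (norm := module) -h2'
      have harg : f + (2:ℂ) • T g = T g := by
        linear_combination (norm := module) hf
      rw [harg, hg]
      refine Prod.ext ?_ ?_
      · simp only [Prod.fst_sub, Prod.fst_zero]
        linear_combination (norm := module) h1
      · simp only [Prod.snd_sub, Prod.snd_zero]
        module
  ext x
  obtain ⟨f, g⟩ := x
  simp only [LinearMap.mem_ker, ContinuousLinearMap.coe_coe]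
  rw [hkerL, hkerT]
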